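/- Contour pair bijection: embedded trees with n edges are in one-to-one correspondence with pairs (E,V) of walks of length 2n such that E is a Dyck path (E(0)=E(2n)=0, |E(t+1)-E(t)|=1, E(t)≥0), V is a bridge with steps in {-1,0,1} (V(0)=V(2n)=0), and whenever E(t)=E(t') with E(s) ≥ E(t) for all t < s < t', one has V(t)=V(t'). -/

import Mathlib

/-- Rooted plane trees with integer labels on vertices. -/
inductive LTree : Type
  | node : ℤ → List LTree → LTree

namespace LTree

/-- The label of the root. -/
def label : LTree → ℤ
  | .node v _ => v

mutual
  /-- Number of edges of a labelled plane tree. -/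
  def numEdges : LTree → ℕ
    | .node _ ts => numEdgesL ts
  def numEdgesL : List LTree → ℕ
    | [] => 0
    | t :: r => numEdges t + 1 + numEdgesL r
end

mutual
  /-- The labels of two adjacent vertices differ by at most 1. -/
  def Good : LTree → Prop
    | .node v ts => GoodL v ts
  def GoodL : ℤ → List LTree → Prop
    | _, [] => True
    | v, t :: r => |label t - v| ≤ 1 ∧ Good t ∧ GoodL v r
end

mutual
  /-- Contour traversal of a tree whose root is at height `h`: the list of
  pairs (height, label) of the vertices visited at times `0, 1, …, 2·numEdges`. -/
  def contour (h : ℕ) : LTree → List (ℕ × ℤ)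
    | .node v ts => (h, v) :: contourL h v ts
  def contourL (h : ℕ) (v : ℤ) : List LTree → List (ℕ × ℤ)
    | [] => []
    | t :: r => contour (h + 1) t ++ [(h, v)] ++ contourL h v r
end

end LTree

namespace LTree

/-- default element -/
def d0 : ℕ × ℤ := (0, 0)

theorem contour_eq (h : ℕ) (v : ℤ) (ts : List LTree) :
    contour h (.node v ts) = (h, v) :: contourL h v ts := by
  simp [contour]

theorem contourL_cons (h : ℕ) (v : ℤ) (t : LTree) (r : List LTree) :
    contourL h v (t :: r) = contour (h + 1) t ++ (h, v) :: contourL h v r := by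
  simp [contourL]

mutual
theorem length_contour (h : ℕ) (T : LTree) : (contour h T).length = 2 * T.numEdges + 1 := by
  match T with
  | .node v ts => simp [contour, numEdges, length_contourL]
theorem length_contourL (h : ℕ) (v : ℤ) (ts : List LTree) :
    (contourL h v ts).length = 2 * numEdgesL ts := by
  match ts with
  | [] => simp [contourL, numEdgesL]
  | t :: r => simp [contourL, numEdgesL, length_contour, length_contourL]; ring
end

theorem contour_ne_nil (h : ℕ) (T : LTree) : contour h T ≠ [] := by
  obtain ⟨v, ts⟩ := T; simp [contour]

theorem contourL_cons_ne_nil (h : ℕ) (v : ℤ) (t : LTree) (r : List LTree) :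
    contourL h v (t :: r) ≠ [] := by
  simp [contourL]

mutual
theorem mem_contour_height (h : ℕ) (T : LTree) :
    ∀ p ∈ contour h T, h ≤ p.1 := by
  match T with
  | .node v ts =>
    intro p hp
    rw [contour_eq] at hp
    rcases List.mem_cons.1 hp with h1 | h1
    · simp [h1]
    · exact mem_contourL_height h v ts p h1
theorem mem_contourL_height (h : ℕ) (v : ℤ) (ts : List LTree) :
    ∀ p ∈ contourL h v ts, h ≤ p.1 := by
  match ts with
  | [] => intro p hp; simp [contourL] at hp
  | t :: r =>
    intro p hp
    rw [contourL_cons] at hp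
    rcases List.mem_append.1 hp with h1 | h1
    · exact le_trans (Nat.le_succ h) (mem_contour_height (h+1) t p h1)
    · rcases List.mem_cons.1 h1 with h2 | h2
      · simp [h2]
      · exact mem_contourL_height h v r p h2
end

mutual
theorem mem_contour_label (h : ℕ) (T : LTree) :
    ∀ p ∈ contour h T, p.1 = h → p.2 = T.label := by
  match T with
  | .node v ts =>
    intro p hp hph
    rw [contour_eq] at hp
    rcases List.mem_cons.1 hp with h1 | h1
    · simp [h1, label]
    · simpa [label] using mem_contourL_label h v ts p h1 hph
theorem mem_contourL_label (h : ℕ) (v : ℤ) (ts : List LTree) :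
    ∀ p ∈ contourL h v ts, p.1 = h → p.2 = v := by
  match ts with
  | [] => intro p hp; simp [contourL] at hp
  | t :: r =>
    intro p hp hph
    rw [contourL_cons] at hp
    rcases List.mem_append.1 hp with h1 | h1
    · have := mem_contour_height (h+1) t p h1; omega
    · rcases List.mem_cons.1 h1 with h2 | h2
      · simp [h2]
      · exact mem_contourL_label h v r p h2 hph
end

mutual
theorem getLast?_contour (h : ℕ) (T : LTree) :
    (contour h T).getLast? = some (h, T.label) := by
  match T with
  | .node v ts =>
    rw [contour_eq]
    match ts with
    | [] => simp [contourL, label]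
    | t :: r =>
      rw [List.getLast?_cons, getLast?_contourL h v t r]
      simp [label]
theorem getLast?_contourL (h : ℕ) (v : ℤ) (t : LTree) (r : List LTree) :
    (contourL h v (t :: r)).getLast? = some (h, v) := by
  rw [contourL_cons]
  match r with
  | [] => simp [contourL]
  | t' :: r' =>
    rw [List.getLast?_append, List.getLast?_cons, getLast?_contourL h v t' r']
    rfl
end
end LTree

namespace LTree

def stepE (p q : ℕ × ℤ) : Prop := q.1 = p.1 + 1 ∨ p.1 = q.1 + 1
def stepV (p q : ℕ × ℤ) : Prop := |q.2 - p.2| ≤ 1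

theorem head?_contour (h : ℕ) (T : LTree) :
    (contour h T).head? = some (h, T.label) := by
  obtain ⟨v, ts⟩ := T; simp [contour, label]

mutual
theorem chainE_contour (h : ℕ) (T : LTree) : (contour h T).Chain' stepE := by
  match T with
  | .node v ts => rw [contour_eq]; exact chainE_contourL h v ts
theorem chainE_contourL (h : ℕ) (v : ℤ) (ts : List LTree) :
    ((h, v) :: contourL h v ts).Chain' stepE := by
  match ts with
  | [] => simp [contourL, List.Chain']
  | t :: r =>
    rw [contourL_cons, ← List.singleton_append, ← List.append_assoc]
    rw [List.Chain', List.isChain_append]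
    refine ⟨?_, chainE_contourL h v r, ?_⟩
    · rw [List.singleton_append, List.isChain_cons]
      refine ⟨?_, chainE_contour (h+1) t⟩
      intro y hy
      rw [head?_contour] at hy
      simp at hy
      subst hy; left; rfl
    · intro x hx y hy
      rw [List.getLast?_append, getLast?_contour] at hx
      simp at hx hy
      subst hx; subst hy
      right; rfl
end

mutual
theorem chainV_contour (h : ℕ) (T : LTree) (hg : T.Good) : (contour h T).Chain' stepV := by
  match T with
  | .node v ts => rw [contour_eq]; exact chainV_contourL h v ts hg
theorem chainV_contourL (h : ℕ) (v : ℤ) (ts : List LTree) (hg : GoodL v ts) :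
    ((h, v) :: contourL h v ts).Chain' stepV := by
  match ts with
  | [] => simp [contourL, List.Chain']
  | t :: r =>
    rw [GoodL] at hg
    obtain ⟨hg1, hg2, hg3⟩ := hg
    rw [contourL_cons, ← List.singleton_append, ← List.append_assoc]
    rw [List.Chain', List.isChain_append]
    refine ⟨?_, chainV_contourL h v r hg3, ?_⟩
    · rw [List.singleton_append, List.isChain_cons]
      refine ⟨?_, chainV_contour (h+1) t hg2⟩
      intro y hy
      rw [head?_contour] at hy
      simp at hy
      subst hy
      simpa [stepV] using hg1
    · intro x hx y hy
      rw [List.getLast?_append, getLast?_contour] at hx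
      simp at hx hy
      subst hx; subst hy
      simp only [stepV]
      rw [abs_sub_comm]
      simpa using hg1
end

end LTree

namespace LTree

/-- Consistency property of a list of (height, label) pairs. -/
def Consist (l : List (ℕ × ℤ)) : Prop :=
  ∀ i j : ℕ, i ≤ j → j < l.length → (l.getD i d0).1 = (l.getD j d0).1 →
    (∀ k, i < k → k < j → (l.getD i d0).1 ≤ (l.getD k d0).1) →
    (l.getD i d0).2 = (l.getD j d0).2

theorem getD_mem {l : List (ℕ × ℤ)} {i : ℕ} (hi : i < l.length) : l.getD i d0 ∈ l := by
  rw [List.getD_eq_getElem _ _ hi]; exact List.getElem_mem _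

mutual
theorem consist_contour (h : ℕ) (T : LTree) : Consist (contour h T) := by
  match T with
  | .node v ts => rw [contour_eq]; exact consist_contourL h v ts
theorem consist_contourL (h : ℕ) (v : ℤ) (ts : List LTree) :
    Consist ((h, v) :: contourL h v ts) := by
  match ts with
  | [] =>
    intro i j hij hj _ _
    simp [contourL] at hj
    have hi0 : i = j := by omega
    rw [hi0]
  | t :: r =>
    intro i j hij hj hEq hMin
    have hl : (h, v) :: contourL h v (t :: r)
        = (h, v) :: (contour (h+1) t ++ ((h, v) :: contourL h v r)) := by
      rw [contourL_cons]
    set A := contour (h+1) t with hA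
    set C := (h, v) :: contourL h v r with hC
    rw [hl] at hj hEq hMin ⊢
    have hlc : (h, v) :: (A ++ C) = contour h (.node v (t :: r)) := by
      rw [contour_eq, contourL_cons]
    have hmem : ∀ p ∈ (h, v) :: (A ++ C), h ≤ p.1 := by
      rw [hlc]; exact mem_contour_height _ _
    have hlab : ∀ p ∈ (h, v) :: (A ++ C), p.1 = h → p.2 = v := by
      intro p hp hph
      rw [hlc] at hp
      simpa [label] using mem_contour_label h _ p hp hph
    have hiLen : i < ((h, v) :: (A ++ C)).length := lt_of_le_of_lt hij hj
    have Mi : ((h, v) :: (A ++ C)).getD i d0 ∈ (h, v) :: (A ++ C) := getD_mem hiLen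
    have Mj : ((h, v) :: (A ++ C)).getD j d0 ∈ (h, v) :: (A ++ C) := getD_mem hj
    by_cases hm : (((h, v) :: (A ++ C)).getD i d0).1 = h
    · rw [hlab _ Mi hm, hlab _ Mj (by rw [← hEq]; exact hm)]
    · have hi1 : h < (((h, v) :: (A ++ C)).getD i d0).1 :=
        lt_of_le_of_ne (hmem _ Mi) (Ne.symm hm)
      obtain ⟨i', rfl⟩ : ∃ i', i = i' + 1 := by
        cases i with
        | zero => exfalso; apply hm; rfl
        | succ i' => exact ⟨i', rfl⟩
      obtain ⟨j', rfl⟩ : ∃ j', j = j' + 1 := ⟨j - 1, by omega⟩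
      have hlen : ((h, v) :: (A ++ C)).length = 1 + (A.length + C.length) := by
        simp; omega
      have hLC : (A ++ C).getD A.length d0 = (h, v) := by
        rw [List.getD_append_right _ _ _ _ (le_refl _)]
        simp [hC]
      simp only [List.getD_cons_succ] at hEq hi1 hm ⊢
      by_cases hiA : i' < A.length
      · have hjA : j' < A.length := by
          by_contra hjA
          push_neg at hjA
          rcases eq_or_lt_of_le hjA with hEq2 | hlt
          · apply hm; rw [hEq, ← hEq2, hLC]
          · have h2 := hMin (A.length + 1) (by omega) (by omega)
            simp only [List.getD_cons_succ] at h2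
            rw [hLC] at h2
            omega
        have e1 : (A ++ C).getD i' d0 = A.getD i' d0 := List.getD_append _ _ _ _ hiA
        have e2 : (A ++ C).getD j' d0 = A.getD j' d0 := List.getD_append _ _ _ _ hjA
        rw [e1, e2] at hEq ⊢
        rw [e1] at hi1
        refine consist_contour (h+1) t i' j' (by omega) hjA hEq ?_
        intro k hk1 hk2
        have h2 := hMin (k + 1) (by omega) (by omega)
        simp only [List.getD_cons_succ] at h2
        rw [e1, List.getD_append _ _ _ _ (by omega : k < A.length)] at h2
        exact h2
      · push_neg at hiA
        have hjA : A.length ≤ j' := le_trans hiA (by omega)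
        have e1 : (A ++ C).getD i' d0 = C.getD (i' - A.length) d0 :=
          List.getD_append_right _ _ _ _ hiA
        have e2 : (A ++ C).getD j' d0 = C.getD (j' - A.length) d0 :=
          List.getD_append_right _ _ _ _ hjA
        rw [e1, e2] at hEq ⊢
        have hCc : Consist C := consist_contourL h v r
        refine hCc (i' - A.length) (j' - A.length) (by omega)
          (by simp only [hlen] at hj; omega) hEq ?_
        intro k hk1 hk2
        have h2 := hMin (k + A.length + 1) (by omega) (by omega)
        simp only [List.getD_cons_succ] at h2
        rw [e1, List.getD_append_right _ _ _ _ (by omega : A.length ≤ k + A.length)] at h2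
        simpa using h2
end

end LTree

namespace LTree

theorem takeWhile_middle {p : ℕ × ℤ → Bool} (a b : List (ℕ × ℤ)) (c : ℕ × ℤ)
    (ha : ∀ x ∈ a, p x = true) (hc : p c = false) :
    (a ++ c :: b).takeWhile p = a ∧ (a ++ c :: b).dropWhile p = c :: b := by
  induction a with
  | nil => simp [List.takeWhile, List.dropWhile, hc]
  | cons x xs ih =>
    have hx : p x = true := ha x (by simp)
    have := ih (fun y hy => ha y (by simp [hy]))
    simp [List.takeWhile, List.dropWhile, hx, this.1, this.2]

mutual
theorem contour_inj (h : ℕ) (T1 T2 : LTree) (he : contour h T1 = contour h T2) :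
    T1 = T2 := by
  match T1, T2 with
  | .node v1 ts1, .node v2 ts2 =>
    rw [contour_eq, contour_eq] at he
    have hv : (h, v1) = (h, v2) := by injection he
    obtain rfl : v1 = v2 := by injection hv
    have hts' : contourL h v1 ts1 = contourL h v1 ts2 := by injection he
    rw [contourL_inj h v1 ts1 ts2 hts']
theorem contourL_inj (h : ℕ) (v : ℤ) (ts1 ts2 : List LTree)
    (he : contourL h v ts1 = contourL h v ts2) : ts1 = ts2 := by
  match ts1, ts2 with
  | [], [] => rfl
  | [], t :: r =>
    exfalso
    rw [contourL] at he
    exact contourL_cons_ne_nil h v t r he.symm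
  | t :: r, [] =>
    exfalso
    rw [contourL] at he
    exact contourL_cons_ne_nil h v t r he
  | t1 :: r1, t2 :: r2 =>
    rw [contourL_cons, contourL_cons] at he
    have key : ∀ (t : LTree) (r : List LTree),
        (contour (h+1) t ++ (h, v) :: contourL h v r).takeWhile
          (fun q => decide (h < q.1)) = contour (h+1) t ∧
        (contour (h+1) t ++ (h, v) :: contourL h v r).dropWhile
          (fun q => decide (h < q.1)) = (h, v) :: contourL h v r := by
      intro t r
      refine takeWhile_middle _ _ _ (fun x hx => ?_) (by simp)
      have := mem_contour_height (h+1) t x hx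
      simp; omega
    have e1 : contour (h+1) t1 = contour (h+1) t2 := by
      rw [← (key t1 r1).1, ← (key t2 r2).1, he]
    have e2 : (h, v) :: contourL h v r1 = (h, v) :: contourL h v r2 := by
      rw [← (key t1 r1).2, ← (key t2 r2).2, he]
    have : contourL h v r1 = contourL h v r2 := by injection e2
    rw [contour_inj (h+1) t1 t2 e1, contourL_inj h v r1 r2 this]
end

end LTree

namespace LTree

theorem chain'_getD {R : ℕ × ℤ → ℕ × ℤ → Prop} {l : List (ℕ × ℤ)} (hc : l.Chain' R)
    {i : ℕ} (hi : i + 1 < l.length) : R (l.getD i d0) (l.getD (i+1) d0) := by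
  rw [List.getD_eq_getElem _ _ (by omega), List.getD_eq_getElem _ _ hi]
  have := List.isChain_iff_getElem.mp hc i (by omega)
  simpa [List.get_eq_getElem] using this

theorem getD_last_eq (l : List (ℕ × ℤ)) (hne : l ≠ []) :
    l.getLast? = some (l.getD (l.length - 1) d0) := by
  rw [List.getLast?_eq_getLast hne, List.getLast_eq_getElem,
    List.getD_eq_getElem _ _ (by
      cases l with
      | nil => exact absurd rfl hne
      | cons a t => simp only [List.length_cons]; omega)]

theorem consist_middle (a m b : List (ℕ × ℤ)) (hc : Consist (a ++ m ++ b)) : Consist m := by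
  intro i j hij hj hEq hMin
  have h1 : ∀ k, k < m.length → (a ++ m ++ b).getD (a.length + k) d0 = m.getD k d0 := by
    intro k hk
    have hk' : a.length + k - a.length = k := by omega
    rw [List.append_assoc, List.getD_append_right _ _ _ _ (by omega), hk',
      List.getD_append _ _ _ _ hk]
  have hlen : (a ++ m ++ b).length = a.length + m.length + b.length := by simp; omega
  have := hc (a.length + i) (a.length + j) (by omega) (by omega)
    (by rw [h1 i (by omega), h1 j hj]; exact hEq) ?_
  · rwa [h1 i (by omega), h1 j hj] at this
  · intro k hk1 hk2
    have hkk : k = a.length + (k - a.length) := by omega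
    rw [h1 i (by omega), hkk, h1 (k - a.length) (by omega)]
    exact hMin (k - a.length) (by omega) (by omega)

/-- Admissible lists at height `h`. -/
def Adm (h : ℕ) (l : List (ℕ × ℤ)) : Prop :=
  l ≠ [] ∧ (∀ p ∈ l, h ≤ p.1) ∧ (l.getD 0 d0).1 = h ∧
  (l.getD (l.length - 1) d0).1 = h ∧
  l.Chain' stepE ∧ l.Chain' stepV ∧ Consist l

theorem exists_tree : ∀ (N : ℕ) (l : List (ℕ × ℤ)), l.length ≤ N → ∀ h : ℕ, Adm h l →
    ∃ T : LTree, T.Good ∧ contour h T = l := by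
  intro N
  induction N with
  | zero =>
    intro l hlN h hadm
    exfalso
    obtain ⟨hne, -⟩ := hadm
    cases l with
    | nil => exact hne rfl
    | cons a l => simp at hlN
  | succ N ih =>
    rintro l hlN h ⟨hne, hmem, hhead, hlast, hcE, hcV, hcons⟩
    match l, hne with
    | (h0, v) :: rest, _ =>
    obtain rfl : h = h0 := by symm; simpa using hhead
    cases rest with
    | nil =>
      refine ⟨.node v [], by simp [Good, GoodL], ?_⟩
      simp [contour, contourL]
    | cons p rest' =>
      set s := (p :: rest').takeWhile (fun q => decide (h < q.1)) with hs_def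
      set r := (p :: rest').dropWhile (fun q => decide (h < q.1)) with hr_def
      have hsr : s ++ r = p :: rest' := List.takeWhile_append_dropWhile ..
      have hmem_s : ∀ x ∈ s, h < x.1 := by
        intro x hx
        have := List.mem_takeWhile_imp hx
        simpa using this
      -- p has height h + 1
      have hstep0 : stepE (h, v) p := (List.isChain_cons_cons.mp hcE).1
      have hp_mem : h ≤ p.1 := hmem p (by simp)
      have hp1 : p.1 = h + 1 := by
        rcases hstep0 with h1 | h1 <;> simp at h1 <;> omega
      -- s starts with p
      have hs_cons : s = p :: rest'.takeWhile (fun q => decide (h < q.1)) := by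
        rw [hs_def, List.takeWhile_cons_of_pos (by simp; omega)]
      have hs_ne : s ≠ [] := by rw [hs_cons]; simp
      have hslen : 0 < s.length := by rw [hs_cons]; simp
      -- rewrite l in terms of s ++ r
      rw [← hsr] at hlN hmem hlast hcE hcV hcons
      have hlen2 : ((h, v) :: (s ++ r)).length = 1 + (s.length + r.length) := by
        simp; omega
      -- r is nonempty
      have hr_ne : r ≠ [] := by
        intro hrnil
        rw [hrnil, List.append_nil] at hlast hlen2
        have : ((h, v) :: s).length - 1 = (s.length - 1) + 1 := by
          simp only [List.length_cons]; omega
        rw [this, List.getD_cons_succ] at hlast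
        have := hmem_s _ (getD_mem (show s.length - 1 < s.length by omega))
        omega
      have hrlen : 0 < r.length := List.length_pos_iff.mpr hr_ne
      obtain ⟨q, r', hr_eq⟩ : ∃ q r', r = q :: r' := List.exists_cons_of_ne_nil hr_ne
      -- q = (h, v)
      have hq_h : q.1 = h := by
        have h1 : h ≤ q.1 := hmem q (by rw [hr_eq]; simp)
        have h2 := List.head?_dropWhile_not (fun q => decide (h < q.1)) (p :: rest')
        rw [← hr_def, hr_eq] at h2
        simp at h2
        omega
      have hgetDr : ((h, v) :: (s ++ r)).getD (s.length + 1) d0 = q := by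
        rw [List.getD_cons_succ, List.getD_append_right _ _ _ _ (le_refl _)]
        simp [hr_eq]
      have hq_v : q.2 = v := by
        have := hcons 0 (s.length + 1) (by omega) (by rw [hlen2]; omega) ?_ ?_
        · rw [hgetDr] at this
          simpa using this.symm
        · rw [hgetDr]
          simpa using hq_h.symm
        · intro k hk1 hk2
          obtain ⟨k', rfl⟩ : ∃ k', k = k' + 1 := ⟨k - 1, by omega⟩
          rw [List.getD_cons_succ, List.getD_append _ _ _ _ (by omega)]
          have := hmem_s _ (getD_mem (show k' < s.length by omega))
          simpa using le_of_lt this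
      have hq : q = (h, v) := by
        obtain ⟨q1, q2⟩ := q
        simp at hq_h hq_v
        rw [hq_h, hq_v]
      rw [hq] at hr_eq
      -- chains on s ++ r
      have hcE' : (s ++ r).Chain' stepE := (List.isChain_cons.mp hcE).2
      have hcV' : (s ++ r).Chain' stepV := (List.isChain_cons.mp hcV).2
      -- last element of s has height h + 1
      have hs_last : (s.getD (s.length - 1) d0).1 = h + 1 := by
        have hstep := chain'_getD hcE (show (s.length - 1) + 1 + 1 < ((h,v) :: (s ++ r)).length by
          rw [hlen2]; omega)
        rw [show s.length - 1 + 1 + 1 = s.length + 1 from by omega] at hstep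
        rw [hgetDr, hq] at hstep
        rw [List.getD_cons_succ, List.getD_append _ _ _ _ (by omega)] at hstep
        have hmm := hmem_s _ (getD_mem (show s.length - 1 < s.length by omega))
        have hstep' : h = (s.getD (s.length - 1) d0).1 + 1 ∨
            (s.getD (s.length - 1) d0).1 = h + 1 := hstep
        omega
      -- Adm (h+1) s
      have hAdm_s : Adm (h + 1) s := by
        refine ⟨hs_ne, fun x hx => hmem_s x hx, ?_, hs_last, ?_, ?_, ?_⟩
        · rw [hs_cons]; simpa using hp1
        · exact (List.isChain_append.mp hcE').1
        · exact (List.isChain_append.mp hcV').1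
        · refine consist_middle [(h, v)] s r ?_
          simpa using hcons
      -- Adm h r
      have hAdm_r : Adm h r := by
        refine ⟨hr_ne, ?_, ?_, ?_, ?_, ?_, ?_⟩
        · intro x hx
          exact hmem x (List.mem_cons_of_mem _ (List.mem_append_right _ hx))
        · rw [hr_eq]; simp
        · have hidx : ((h,v) :: (s ++ r)).getD (((h,v) :: (s ++ r)).length - 1) d0
              = r.getD (r.length - 1) d0 := by
            rw [show ((h,v) :: (s ++ r)).length - 1 = (s.length + (r.length - 1)) + 1 from by
              rw [hlen2]; omega]
            rw [List.getD_cons_succ, List.getD_append_right _ _ _ _ (by omega)]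
            congr 1
            omega
          rw [hidx] at hlast
          exact hlast
        · exact (List.isChain_append.mp hcE').2.1
        · exact (List.isChain_append.mp hcV').2.1
        · refine consist_middle ((h, v) :: s) r [] ?_
          simpa using hcons
      have hslN : s.length ≤ N := by rw [hlen2] at hlN; omega
      have hrlN : r.length ≤ N := by rw [hlen2] at hlN; omega
      obtain ⟨t, hgt, hct⟩ := ih s hslN (h+1) hAdm_s
      obtain ⟨T', hgT', hcT'⟩ := ih r hrlN h hAdm_r
      obtain ⟨v2, ts2⟩ := T'
      rw [contour_eq, hr_eq] at hcT'
      have hv2 : v2 = v := by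
        have h9 : (h, v2) = (h, v) := by injection hcT'
        injection h9
      rw [hv2] at hgT' hcT'
      have hr' : contourL h v ts2 = r' := by injection hcT'
      refine ⟨.node v (t :: ts2), ?_, ?_⟩
      · rw [Good, GoodL]
        refine ⟨?_, hgt, ?_⟩
        · have hhd : (contour (h+1) t).head? = some (h+1, t.label) := head?_contour _ _
          rw [hct, hs_cons] at hhd
          simp at hhd
          have hstepV0 : stepV (h, v) p := by
            have h9 := (List.isChain_cons.mp hcV).1
            apply h9
            rw [hs_cons]
            rfl
          rw [hhd] at hstepV0
          simpa [stepV] using hstepV0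
        · rw [Good] at hgT'
          exact hgT'
      · rw [contour_eq, contourL_cons, hct, hr', ← hr_eq, hsr]


end LTree


/-- Embedded trees with `n` edges: root label `0`, adjacent labels differing by
at most `1`. -/
def EmbTrees0 (n : ℕ) : Set LTree :=
  {T | T.Good ∧ T.label = 0 ∧ T.numEdges = n}

/-- The contour pair `(E, V)` of a tree: `E t` is the height and `V t` the
label of the vertex visited at time `t` of the contour traversal. -/
def contourPair (n : ℕ) (T : LTree) :
    (Fin (2 * n + 1) → ℤ) × (Fin (2 * n + 1) → ℤ) :=
  (fun t => (((T.contour 0).getD t.val (0, 0)).1 : ℤ),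
   fun t => ((T.contour 0).getD t.val (0, 0)).2)

/-- The set `𝓔𝓥_{2n}` of admissible pairs of walks of length `2n`:
`E` is a Dyck path, `V` is a bridge with steps in `{-1,0,1}`, and the
consistency condition holds. -/
def EVSet (n : ℕ) : Set ((Fin (2 * n + 1) → ℤ) × (Fin (2 * n + 1) → ℤ)) :=
  {p |
    p.1 ⟨0, Nat.succ_pos _⟩ = 0 ∧ p.1 ⟨2 * n, Nat.lt_succ_self _⟩ = 0 ∧
    (∀ t : Fin (2 * n + 1), 0 ≤ p.1 t) ∧
    (∀ t : Fin (2 * n + 1), ∀ ht : t.val + 1 < 2 * n + 1,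
      |p.1 ⟨t.val + 1, ht⟩ - p.1 t| = 1) ∧
    p.2 ⟨0, Nat.succ_pos _⟩ = 0 ∧ p.2 ⟨2 * n, Nat.lt_succ_self _⟩ = 0 ∧
    (∀ t : Fin (2 * n + 1), ∀ ht : t.val + 1 < 2 * n + 1,
      |p.2 ⟨t.val + 1, ht⟩ - p.2 t| ≤ 1) ∧
    (∀ t t' : Fin (2 * n + 1), t ≤ t' → p.1 t = p.1 t' →
      (∀ s : Fin (2 * n + 1), t < s → s < t' → p.1 t ≤ p.1 s) → p.2 t = p.2 t')}

set_option maxHeartbeats 1000000 in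
open LTree in
/-- Contour pair bijection: taking contour pairs puts embedded trees with `n`
edges in one-to-one correspondence with the set `𝓔𝓥_{2n}`. -/
theorem contourPair_bijOn (n : ℕ) :
    Set.BijOn (contourPair n) (EmbTrees0 n) (EVSet n) := by
  have hd0 : ((0, 0) : ℕ × ℤ) = d0 := rfl
  refine ⟨?_, ?_, ?_⟩
  · -- MapsTo
    rintro T ⟨hg, hlabel, hnum⟩
    have hlen : (T.contour 0).length = 2 * n + 1 := by
      rw [length_contour, hnum]
    have hhd : (T.contour 0).getD 0 d0 = (0, T.label) := by
      obtain ⟨v, ts⟩ := T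
      rw [contour_eq, List.getD_cons_zero]
      rfl
    have hlst : (T.contour 0).getD (2 * n) d0 = (0, T.label) := by
      have h1 := getD_last_eq (T.contour 0) (contour_ne_nil 0 T)
      rw [getLast?_contour] at h1
      have h2 := Option.some.inj h1
      rw [show 2 * n = (T.contour 0).length - 1 by omega, ← h2]
    simp only [EVSet, Set.mem_setOf_eq, contourPair, hd0]
    refine ⟨?_, ?_, ?_, ?_, ?_, ?_, ?_, ?_⟩
    · rw [hhd]; rfl
    · rw [hlst]; rfl
    · intro t; exact Int.natCast_nonneg _
    · intro t ht
      have hstep := chain'_getD (chainE_contour 0 T) (show t.val + 1 < (T.contour 0).length by omega)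
      have h2 : (((T.contour 0).getD (t.val + 1) d0).1 : ℤ) - ((T.contour 0).getD t.val d0).1 = 1 ∨
          (((T.contour 0).getD (t.val + 1) d0).1 : ℤ) - ((T.contour 0).getD t.val d0).1 = -1 := by
        rcases hstep with h1 | h1 <;> [left; right] <;> omega
      rcases h2 with h2 | h2 <;> rw [h2] <;> simp
    · rw [hhd]; simpa using hlabel
    · rw [hlst]; simpa using hlabel
    · intro t ht
      exact chain'_getD (chainV_contour 0 T hg) (show t.val + 1 < (T.contour 0).length by omega)
    · intro t t' htt hEE hMin
      refine consist_contour 0 T t.val t'.val htt (by omega) (by exact_mod_cast hEE) ?_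
      intro k hk1 hk2
      have := hMin ⟨k, by omega⟩ (by simpa [Fin.lt_def] using hk1) (by simpa [Fin.lt_def] using hk2)
      exact_mod_cast this
  · -- InjOn
    rintro T1 ⟨hg1, hl1, hn1⟩ T2 ⟨hg2, hl2, hn2⟩ heq
    have hlen1 : (T1.contour 0).length = 2 * n + 1 := by rw [length_contour, hn1]
    have hlen2 : (T2.contour 0).length = 2 * n + 1 := by rw [length_contour, hn2]
    refine contour_inj 0 T1 T2 ?_
    refine List.ext_getElem (by rw [hlen1, hlen2]) ?_
    intro i hi1 hi2
    have hE := congrFun (congrArg Prod.fst heq) ⟨i, by omega⟩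
    have hV := congrFun (congrArg Prod.snd heq) ⟨i, by omega⟩
    simp only [contourPair] at hE hV
    rw [List.getD_eq_getElem _ _ hi1, List.getD_eq_getElem _ _ hi2] at hE hV
    have hE' : ((T1.contour 0)[i]).1 = ((T2.contour 0)[i]).1 := by exact_mod_cast hE
    exact Prod.ext hE' hV
  · -- SurjOn
    rintro ⟨E, V⟩ ⟨hE0, hE2n, hEpos, hEstep, hV0, hV2n, hVstep, hcons⟩
    dsimp only at hE0 hE2n hEpos hEstep hV0 hV2n hVstep hcons
    set L := List.ofFn (fun i : Fin (2 * n + 1) => ((E i).toNat, V i)) with hL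
    have hLlen : L.length = 2 * n + 1 := by simp [hL]
    have hgetD : ∀ (i : ℕ) (hi : i < 2 * n + 1) (t : Fin (2 * n + 1)), t.val = i →
        L.getD i d0 = ((E t).toNat, V t) := by
      rintro i hi t rfl
      rw [List.getD_eq_getElem _ _ (by omega)]
      simp only [hL, List.getElem_ofFn]
    clear_value L
    clear hL
    have hAdm : Adm 0 L := by
      refine ⟨by rw [← List.length_pos_iff_ne_nil]; omega, fun p _ => Nat.zero_le _, ?_, ?_, ?_, ?_, ?_⟩
      · rw [hgetD 0 (by omega) ⟨0, Nat.succ_pos _⟩ rfl, hE0]; rfl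
      · rw [hLlen, show 2 * n + 1 - 1 = 2 * n from rfl]
        rw [hgetD (2 * n) (by omega) ⟨2 * n, Nat.lt_succ_self _⟩ rfl, hE2n]; rfl
      · rw [List.Chain', List.isChain_iff_getElem]
        intro i hi
        rw [← List.getD_eq_getElem L d0 (show i < L.length by omega),
          ← List.getD_eq_getElem L d0 (show i + 1 < L.length by omega)]
        have hi2 : i + 1 < 2 * n + 1 := by omega
        rw [hgetD i (by omega) ⟨i, by omega⟩ rfl, hgetD (i+1) (by omega) ⟨i+1, hi2⟩ rfl]
        have h2 := hEpos ⟨i, by omega⟩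
        have h3 := hEpos ⟨i + 1, hi2⟩
        have h4 : E ⟨(⟨i, by omega⟩ : Fin (2*n+1)).val + 1, hi2⟩ = E ⟨i + 1, hi2⟩ := rfl
        simp only [stepE]
        rcases abs_eq (by norm_num : (0:ℤ) ≤ 1) |>.mp (hEstep ⟨i, by omega⟩ hi2) with h5 | h5 <;>
          rw [h4] at h5 <;> [left; right] <;> omega
      · rw [List.Chain', List.isChain_iff_getElem]
        intro i hi
        rw [← List.getD_eq_getElem L d0 (show i < L.length by omega),
          ← List.getD_eq_getElem L d0 (show i + 1 < L.length by omega)]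
        have hi2 : i + 1 < 2 * n + 1 := by omega
        rw [hgetD i (by omega) ⟨i, by omega⟩ rfl, hgetD (i+1) (by omega) ⟨i+1, hi2⟩ rfl]
        have h1 := hVstep ⟨i, by omega⟩ hi2
        have h4 : V ⟨(⟨i, by omega⟩ : Fin (2*n+1)).val + 1, hi2⟩ = V ⟨i + 1, hi2⟩ := rfl
        rw [h4] at h1
        exact h1
      · intro i j hij hj hEq hMin
        rw [hLlen] at hj
        have hi : i < 2 * n + 1 := by omega
        rw [hgetD i (by omega) ⟨i, by omega⟩ rfl, hgetD j hj ⟨j, hj⟩ rfl] at hEq ⊢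
        rw [hgetD i (by omega) ⟨i, by omega⟩ rfl] at hMin
        have hq := hcons ⟨i, by omega⟩ ⟨j, hj⟩ (by simpa [Fin.le_def] using hij) ?_ ?_
        · simpa using hq
        · have h2 := hEpos ⟨i, by omega⟩
          have h3 := hEpos ⟨j, hj⟩
          simp only at hEq
          omega
        · intro sF hlt1 hlt2
          rw [Fin.lt_def] at hlt1 hlt2
          have h5 := hMin sF.val (by simpa using hlt1) (by simpa using hlt2)
          rw [hgetD sF.val (by omega) sF rfl] at h5
          simp only at h5
          have h2 := hEpos ⟨i, by omega⟩
          have h3 := hEpos sF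
          omega
    obtain ⟨T, hgT, hcT⟩ := exists_tree (2 * n + 1) L (by omega) 0 hAdm
    have hlabelT : T.label = 0 := by
      have h1 := head?_contour 0 T
      rw [hcT] at h1
      obtain ⟨x, L2, hL2⟩ := List.exists_cons_of_ne_nil
        (show L ≠ [] by rw [← List.length_pos_iff_ne_nil]; omega)
      rw [hL2] at h1
      simp at h1
      have h2 : L.getD 0 d0 = x := by rw [hL2]; rfl
      rw [hgetD 0 (by omega) ⟨0, Nat.succ_pos _⟩ rfl] at h2
      rw [← h2] at h1
      have h3 : V ⟨0, Nat.succ_pos _⟩ = T.label := congrArg Prod.snd h1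
      rw [← h3, hV0]
    have hnum : T.numEdges = n := by
      have h1 := length_contour 0 T
      rw [hcT, hLlen] at h1
      omega
    refine ⟨T, ⟨hgT, hlabelT, hnum⟩, ?_⟩
    have hone : ∀ t : Fin (2 * n + 1), (T.contour 0).getD t.val (0, 0) = ((E t).toNat, V t) := by
      intro t
      rw [hd0, hcT]
      exact hgetD t.val (by omega) t rfl
    refine Prod.ext ?_ ?_ <;> funext t <;> simp only [contourPair, hone t]
    · exact Int.toNat_of_nonneg (hEpos t)
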